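/- Let M be a nonzero comultiplication R-module with finitely many minimal submodules and at least two of them. Then no vertex of the large sum graph Ǵ(M) is adjacent to every other vertex; in particular Ǵ(M) is not a complete graph (when it has at least two vertices). -/

import Mathlib

/-- `M` is a comultiplication `R`-module: every submodule is of the form `(0 :_M I)`. -/
def IsComultiplication (R M : Type*) [CommRing R] [AddCommGroup M] [Module R M] : Prop :=
  ∀ N : Submodule R M, ∃ I : Ideal R, ∀ m : M, m ∈ N ↔ ∀ r ∈ I, r • m = 0

/-- A submodule is large (essential) if it meets every nonzero submodule nontrivially. -/
def IsLarge {R M : Type*} [CommRing R] [AddCommGroup M] [Module R M]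
    (N : Submodule R M) : Prop :=
  ∀ L : Submodule R M, L ≠ ⊥ → N ⊓ L ≠ ⊥

/-- The vertices of the large sum graph: nonzero non-large submodules. -/
abbrev LargeSumVtx (R M : Type*) [CommRing R] [AddCommGroup M] [Module R M] :=
  {N : Submodule R M // N ≠ ⊥ ∧ ¬ IsLarge N}

/-- The large sum graph: distinct nonzero non-large submodules `N, K` are adjacent
iff `N + K` is not large. -/
def largeSumGraph (R M : Type*) [CommRing R] [AddCommGroup M] [Module R M] :
    SimpleGraph (LargeSumVtx R M) where
  Adj N K := N ≠ K ∧ ¬ IsLarge (N.1 ⊔ K.1)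
  symm := ⟨fun a b ⟨h1, h2⟩ => ⟨h1.symm, by rwa [sup_comm]⟩⟩
  loopless := ⟨fun a h => h.1 rfl⟩


section Aux

variable {R M : Type*} [CommRing R] [AddCommGroup M] [Module R M]

variable {R M : Type*} [CommRing R] [AddCommGroup M] [Module R M]

/-- In a comultiplication module, `N = (0 :_M Ann N)` pointwise. -/
lemma comul_mem_iff (hc : IsComultiplication R M) (N : Submodule R M) (m : M) :
    m ∈ N ↔ ∀ r ∈ N.annihilator, r • m = 0 := by
  obtain ⟨I, hI⟩ := hc N
  constructor
  · intro hm r hr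
    exact Submodule.mem_annihilator.mp hr m hm
  · intro h
    rw [hI]
    intro r hr
    refine h r ?_
    rw [Submodule.mem_annihilator]
    intro n hn
    exact (hI n).mp hn r hr

/-- If `y ≠ 0` and `Ann(y)` is maximal then `span {y}` is an atom. -/
lemma span_atom {y : M} (hy : y ≠ 0)
    (hmax : (Submodule.span R {y} : Submodule R M).annihilator.IsMaximal) :
    IsAtom (Submodule.span R {y} : Submodule R M) := by
  constructor
  · simpa [Submodule.span_singleton_eq_bot] using hy
  · intro b hb
    by_contra hbne
    obtain ⟨z, hzb, hz0⟩ := Submodule.ne_bot_iff b |>.mp hbne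
    obtain ⟨r, hr⟩ := Submodule.mem_span_singleton.mp (hb.le hzb)
    have hrnot : r ∉ (Submodule.span R {y} : Submodule R M).annihilator := by
      intro hrin
      have := (Submodule.mem_annihilator_span_singleton y r).mp hrin
      rw [this] at hr; exact hz0 hr.symm
    obtain ⟨s, i, hi, hsi⟩ := hmax.exists_inv hrnot
    have hiy : i • y = 0 := (Submodule.mem_annihilator_span_singleton y i).mp hi
    have : y = s • z := by
      have : (s * r + i) • y = y := by rw [hsi, one_smul]
      rw [add_smul, mul_smul, hiy, add_zero, hr] at this
      exact this.symm
    have : y ∈ b := this ▸ b.smul_mem s hzb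
    exact hb.ne (le_antisymm hb.le ((Submodule.span_singleton_le_iff_mem y b).mpr this))

/-- Every nonzero submodule of a comultiplication module contains an atom. -/
lemma exists_atom_le (hc : IsComultiplication R M) (N : Submodule R M) (hN : N ≠ ⊥) :
    ∃ T : Submodule R M, IsAtom T ∧ T ≤ N := by
  obtain ⟨x, hxN, hx0⟩ := Submodule.ne_bot_iff N |>.mp hN
  set I : Ideal R := (Submodule.span R {x} : Submodule R M).annihilator with hIdef
  have hIne : I ≠ ⊤ := by
    intro h
    have : (1:R) • x = 0 :=
      (Submodule.mem_annihilator_span_singleton x 1).mp (by rw [hIdef] at h; rw [h]; trivial)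
    rw [one_smul] at this; exact hx0 this
  obtain ⟨mI, hmImax, hImI⟩ := Ideal.exists_le_maximal I hIne
  set P : Submodule R M := mI • (Submodule.span R {x}) with hPdef
  have hxP : x ∉ P := by
    intro hxmem
    obtain ⟨c, hc', hcx⟩ := Submodule.mem_smul_span_singleton.mp hxmem
    have : (1 - c) • x = 0 := by rw [sub_smul, one_smul, hcx, sub_self]
    have h1c : (1 - c) ∈ I := (Submodule.mem_annihilator_span_singleton x _).mpr this
    have : (1:R) ∈ mI := by
      have := mI.add_mem (hImI h1c) hc'
      simpa using this
    exact hmImax.ne_top (Ideal.eq_top_iff_one mI |>.mpr this)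
  obtain ⟨J, hJ⟩ := hc P
  have : ¬ ∀ a ∈ J, a • x = 0 := fun h => hxP ((hJ x).mpr h)
  push_neg at this
  obtain ⟨a, haJ, hax⟩ := this
  refine ⟨Submodule.span R {a • x}, ?_, ?_⟩
  · apply span_atom hax
    have hann : (Submodule.span R {a • x} : Submodule R M).annihilator = mI := by
      apply le_antisymm
      · -- annihilator ≤ mI  : since mI maximal and ann ≠ ⊤ and mI ≤ ann
        have hne : (Submodule.span R {a • x} : Submodule R M).annihilator ≠ ⊤ := by
          intro h
          have : (1:R) • (a • x) = 0 :=
            (Submodule.mem_annihilator_span_singleton _ 1).mp (h ▸ Submodule.mem_top)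
          rw [one_smul] at this; exact hax this
        have hle : mI ≤ (Submodule.span R {a • x} : Submodule R M).annihilator := by
          intro b hb
          refine (Submodule.mem_annihilator_span_singleton _ b).mpr ?_
          have hbxP : b • x ∈ P := Submodule.smul_mem_smul hb (Submodule.mem_span_singleton_self x)
          have : a • (b • x) = 0 := (hJ (b • x)).mp hbxP a haJ
          rw [smul_comm] at this
          exact this
        exact le_of_eq (hmImax.eq_of_le hne hle).symm
      · intro b hb
        refine (Submodule.mem_annihilator_span_singleton _ b).mpr ?_
        have hbxP : b • x ∈ P := Submodule.smul_mem_smul hb (Submodule.mem_span_singleton_self x)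
        have : a • (b • x) = 0 := (hJ (b • x)).mp hbxP a haJ
        rw [smul_comm] at this
        exact this
    rw [hann]; exact hmImax
  · rw [Submodule.span_singleton_le_iff_mem]
    exact N.smul_mem a hxN

/-- The annihilator of an atom is a maximal ideal. -/
lemma atom_annihilator_maximal {T : Submodule R M} (hT : IsAtom T) :
    T.annihilator.IsMaximal := by
  obtain ⟨x, hxT, hx0⟩ := Submodule.ne_bot_iff T |>.mp hT.1
  have hspan : Submodule.span R {x} = T := by
    have hle : Submodule.span R {x} ≤ T := (Submodule.span_singleton_le_iff_mem x T).mpr hxT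
    rcases hT.le_iff.mp hle with h | h
    · exact absurd (by simpa [Submodule.span_singleton_eq_bot] using h) hx0
    · exact h
  rw [Ideal.isMaximal_iff]
  constructor
  · intro h1
    have : (1:R) • x = 0 := Submodule.mem_annihilator.mp h1 x hxT
    rw [one_smul] at this; exact hx0 this
  · intro J r hTJ hrnot hrJ
    have hrx : r • x ≠ 0 := by
      intro h
      apply hrnot
      rw [← hspan]
      exact (Submodule.mem_annihilator_span_singleton x r).mpr h
    have hrxT : r • x ∈ T := T.smul_mem r hxT
    have hspan2 : Submodule.span R {r • x} = T := by
      have hle : Submodule.span R {r • x} ≤ T := (Submodule.span_singleton_le_iff_mem _ T).mpr hrxT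
      rcases hT.le_iff.mp hle with h | h
      · exact absurd (by simpa [Submodule.span_singleton_eq_bot] using h) hrx
      · exact h
    have hxmem : x ∈ Submodule.span R {r • x} := by rw [hspan2]; exact hxT
    obtain ⟨s, hs⟩ := Submodule.mem_span_singleton.mp hxmem
    have : (1 - s * r) • x = 0 := by
      rw [sub_smul, one_smul, mul_smul, hs, sub_self]
    have h1sr : (1 - s * r) ∈ T.annihilator := by
      rw [← hspan]
      exact (Submodule.mem_annihilator_span_singleton x _).mpr this
    have : (1 - s * r) + s * r ∈ J := J.add_mem (hTJ h1sr) (J.mul_mem_left s hrJ)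
    simpa using this

/-- Distinct atoms in a comultiplication module have distinct annihilators. -/
lemma atom_ann_inj (hc : IsComultiplication R M) {T T' : Submodule R M}
    (h : T.annihilator = T'.annihilator) : T = T' := by
  ext m
  rw [comul_mem_iff hc T, comul_mem_iff hc T', h]

/-- Killing elements of a finite sup. -/
lemma finset_sup_ann {m : Ideal R} (hm : m.IsMaximal) :
    ∀ F : Finset (Submodule R M), (∀ T ∈ F, ∃ a, a ∉ m ∧ ∀ z ∈ T, a • z = 0) →
      ∀ x ∈ F.sup id, ∃ a, a ∉ m ∧ a • x = 0 := by
  intro F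
  classical
  induction F using Finset.induction_on with
  | empty =>
      intro _ x hx
      simp only [Finset.sup_empty, Submodule.mem_bot] at hx
      exact ⟨1, by simp [Ideal.eq_top_iff_one] at *; exact fun h => hm.ne_top (Ideal.eq_top_iff_one m |>.mpr h), by rw [hx, smul_zero]⟩
  | insert T F' hTF ih =>
      intro hAll x hx
      rw [Finset.sup_insert] at hx
      obtain ⟨y, hy, z, hz, rfl⟩ := Submodule.mem_sup.mp hx
      obtain ⟨a₁, ha₁m, ha₁⟩ := hAll T (Finset.mem_insert_self T F')
      obtain ⟨a₂, ha₂m, ha₂⟩ := ih (fun T' hT' => hAll T' (Finset.mem_insert_of_mem hT')) z hz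
      refine ⟨a₁ * a₂, ?_, ?_⟩
      · intro hmem
        rcases hm.isPrime.mem_or_mem hmem with h | h
        · exact ha₁m h
        · exact ha₂m h
      · rw [smul_add]
        have h1 : (a₁ * a₂) • y = 0 := by
          rw [mul_comm, mul_smul, ha₁ y hy, smul_zero]
        have h2 : (a₁ * a₂) • z = 0 := by rw [mul_smul, ha₂, smul_zero]
        rw [h1, h2, add_zero]


/-- A submodule containing the socle is large. -/
lemma large_of_socle_le (hc : IsComultiplication R M) {W : Submodule R M}
    (h : ∀ T : Submodule R M, IsAtom T → T ≤ W) : IsLarge W := by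
  intro L hL h0
  obtain ⟨T, hT, hTL⟩ := exists_atom_le hc L hL
  have : T ≤ W ⊓ L := le_inf (h T hT) hTL
  rw [h0] at this
  exact hT.1 (le_bot_iff.mp this)

end Aux

/-- If a nonzero comultiplication module has finitely many minimal submodules and at least two
of them, then no vertex of the large sum graph is adjacent to every other vertex; in particular
the graph is not complete. -/
theorem stmt11 {R M : Type*} [CommRing R] [AddCommGroup M] [Module R M]
    [Nontrivial M] (hc : IsComultiplication R M)
    (hfin : {S : Submodule R M | IsAtom S}.Finite)
    (S₁ S₂ : Submodule R M) (hS₁ : IsAtom S₁) (hS₂ : IsAtom S₂) (hne : S₁ ≠ S₂) :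
    ∀ v : LargeSumVtx R M, ∃ u : LargeSumVtx R M, u ≠ v ∧ ¬ (largeSumGraph R M).Adj v u := by
  rintro ⟨N, hN0, hNlarge⟩
  -- N is not large: get L with N ⊓ L = ⊥
  simp only [IsLarge, not_forall] at hNlarge
  obtain ⟨L, hL0, hNL⟩ := hNlarge
  rw [not_not] at hNL
  obtain ⟨S, hS, hSL⟩ := exists_atom_le hc L hL0
  have hSnotN : ¬ S ≤ N := by
    intro h
    have : S ≤ N ⊓ L := le_inf h hSL
    rw [hNL] at this
    exact hS.1 (le_bot_iff.mp this)
  -- the sup of all atoms not contained in N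
  have hBfin : {T : Submodule R M | IsAtom T ∧ ¬ T ≤ N}.Finite :=
    hfin.subset (fun T h => h.1)
  classical
  set F : Finset (Submodule R M) := hBfin.toFinset with hFdef
  have hmemF : ∀ T, T ∈ F ↔ IsAtom T ∧ ¬ T ≤ N := by
    intro T; rw [hFdef, Set.Finite.mem_toFinset]; rfl
  set u : Submodule R M := F.sup id with hudef
  have hSu : S ≤ u := by
    have : S ∈ F := (hmemF S).mpr ⟨hS, hSnotN⟩
    exact Finset.le_sup (f := id) this
  have hu0 : u ≠ ⊥ := by
    intro h
    exact hS.1 (le_bot_iff.mp (h ▸ hSu))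
  -- N ⊔ u contains every atom
  have hsocle : ∀ T : Submodule R M, IsAtom T → T ≤ N ⊔ u := by
    intro T hT
    by_cases h : T ≤ N
    · exact h.trans le_sup_left
    · exact (Finset.le_sup (f := id) ((hmemF T).mpr ⟨hT, h⟩)).trans le_sup_right
  -- an atom inside N
  obtain ⟨T₀, hT₀, hT₀N⟩ := exists_atom_le hc N hN0
  -- T₀ is not contained in u
  have hT₀u : ¬ T₀ ≤ u := by
    intro hle
    obtain ⟨x, hxT, hx0⟩ := Submodule.ne_bot_iff T₀ |>.mp hT₀.1
    have hspan : Submodule.span R {x} = T₀ := by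
      have hle' : Submodule.span R {x} ≤ T₀ := (Submodule.span_singleton_le_iff_mem x T₀).mpr hxT
      rcases hT₀.le_iff.mp hle' with h | h
      · exact absurd (by simpa [Submodule.span_singleton_eq_bot] using h) hx0
      · exact h
    have hmax : T₀.annihilator.IsMaximal := atom_annihilator_maximal hT₀
    have key : ∀ T ∈ F, ∃ a, a ∉ T₀.annihilator ∧ ∀ z ∈ T, a • z = 0 := by
      intro T hTF
      obtain ⟨hTatom, hTnotN⟩ := (hmemF T).mp hTF
      have hTmax : T.annihilator.IsMaximal := atom_annihilator_maximal hTatom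
      have hanne : T.annihilator ≠ T₀.annihilator := by
        intro h
        exact hTnotN ((atom_ann_inj hc h) ▸ hT₀N)
      have : ¬ T.annihilator ≤ T₀.annihilator := by
        intro hle'
        exact hanne (hTmax.eq_of_le hmax.ne_top hle')
      obtain ⟨a, haT, ham⟩ := Set.not_subset.mp this
      exact ⟨a, ham, fun z hz => Submodule.mem_annihilator.mp haT z hz⟩
    obtain ⟨a, ham, hax⟩ := finset_sup_ann hmax F key x (hle hxT)
    exact ham (Submodule.mem_annihilator.mpr (fun n hn => by
      rw [← hspan] at hn
      obtain ⟨r, hr⟩ := Submodule.mem_span_singleton.mp hn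
      rw [← hr, smul_comm, hax, smul_zero]))
  have hular : ¬ IsLarge u := by
    intro hlarge
    apply hlarge T₀ hT₀.1
    rcases hT₀.le_iff.mp (inf_le_right : u ⊓ T₀ ≤ T₀) with h | h
    · exact h
    · exact absurd (h ▸ (inf_le_left : u ⊓ T₀ ≤ u)) hT₀u
  refine ⟨⟨u, hu0, hular⟩, ?_, ?_⟩
  · intro h
    have : u = N := congrArg Subtype.val h
    exact hSnotN (this ▸ hSu)
  · change ¬ (_ ∧ _)
    rintro ⟨-, hnl⟩
    exact hnl (large_of_socle_le hc (fun T hT => (hsocle T hT).trans (le_of_eq rfl)))
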